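/- arXiv:2108.00288 — 5 statements merged into one kernel-verified Lean document; each statement's English description precedes it below -/
import Mathlib

section
/- Let k ≥ 2. The number of natural numbers N such that both N and N + 2 lie in the interval [5, 4 + ∏_{i=1}^{k} P_i] and both N and N + 2 are coprime to ∏_{i=1}^{k} P_i is exactly ∏_{i=2}^{k} (P_i − 2). -/
/-- `P i` is the `i`-th prime number (1-indexed): `P 1 = 2`, `P 2 = 3`, `P 3 = 5`, ... -/
noncomputable def P (i : ℕ) : ℕ := Nat.nth Nat.Prime (i - 1)

/-- The `k`-th primorial, `∏_{i=1}^{k} P_i`. -/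
noncomputable def primor (k : ℕ) : ℕ := ∏ i ∈ Finset.Icc 1 k, P i

lemma P_prime (i : ℕ) : (P i).Prime := Nat.prime_nth_prime _

lemma P_one : P 1 = 2 := by
  have := Nat.nth_count (p := Nat.Prime) (n := 2) (by norm_num)
  simpa [P, show Nat.count Nat.Prime 2 = 0 by decide] using this

lemma P_two : P 2 = 3 := by
  have := Nat.nth_count (p := Nat.Prime) (n := 3) (by norm_num)
  simpa [P, show Nat.count Nat.Prime 3 = 1 by decide] using this

lemma P_lt_P {i j : ℕ} (h1 : 1 ≤ i) (h2 : i < j) : P i < P j := by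
  unfold P
  exact (Nat.nth_lt_nth Nat.infinite_setOf_prime).mpr (by omega)

lemma primor_pos (k : ℕ) : 0 < primor k := Finset.prod_pos (fun i _ => (P_prime i).pos)

instance primor_neZero (k : ℕ) : NeZero (primor k) := ⟨(primor_pos k).ne'⟩

instance P_neZero (i : ℕ) : NeZero (P i) := ⟨(P_prime i).pos.ne'⟩

lemma P_dvd_primor {i k : ℕ} (h1 : 1 ≤ i) (h2 : i ≤ k) : P i ∣ primor k :=
  Finset.dvd_prod_of_mem _ (Finset.mem_Icc.mpr ⟨h1, h2⟩)

lemma isUnit_prod {M N : Type*} [Monoid M] [Monoid N] (p : M × N) :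
    IsUnit p ↔ IsUnit p.1 ∧ IsUnit p.2 := by
  constructor
  · intro h; exact ⟨h.map (MonoidHom.fst M N), h.map (MonoidHom.snd M N)⟩
  · rintro ⟨⟨u, hu⟩, ⟨v, hv⟩⟩
    exact ⟨⟨((u : M), (v : N)), ((↑u⁻¹ : M), (↑v⁻¹ : N)), by simp [Prod.ext_iff],
      by simp [Prod.ext_iff]⟩, by simp [Prod.ext_iff, hu, hv]⟩

open scoped Classical

/-- Number of residues `x` mod `M` with `x` and `x + 2` both units. -/
noncomputable def g (M : ℕ) [NeZero M] : ℕ :=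
  (Finset.univ.filter (fun x : ZMod M => IsUnit x ∧ IsUnit (x + 2))).card

lemma g_congr {a b : ℕ} [NeZero a] [NeZero b] (h : a = b) : g a = g b := by
  subst h; rfl

lemma g_two : g 2 = 1 := by
  have hset : (Finset.univ.filter (fun x : ZMod 2 => IsUnit x ∧ IsUnit (x + 2))) = {1} := by
    ext x
    simp only [Finset.mem_filter, Finset.mem_univ, true_and, Finset.mem_singleton, isUnit_iff_ne_zero]
    revert x; decide
  rw [g, hset, Finset.card_singleton]

lemma g_odd {p : ℕ} [NeZero p] (hp : p.Prime) (h2 : 2 < p) : g p = p - 2 := by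
  haveI : Fact p.Prime := ⟨hp⟩
  have hne2 : (2 : ZMod p) ≠ 0 := by
    intro h
    have : ((2 : ℕ) : ZMod p) = 0 := by push_cast; exact h
    rw [ZMod.natCast_eq_zero_iff] at this
    have := Nat.le_of_dvd (by norm_num) this
    omega
  have hset : (Finset.univ.filter (fun x : ZMod p => IsUnit x ∧ IsUnit (x + 2)))
      = Finset.univ \ {0, -2} := by
    ext x
    simp only [Finset.mem_filter, Finset.mem_univ, true_and, Finset.mem_sdiff,
      Finset.mem_insert, Finset.mem_singleton, isUnit_iff_ne_zero]
    constructor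
    · rintro ⟨hx0, hx2⟩
      push_neg
      exact ⟨hx0, fun h => hx2 (by rw [h]; ring)⟩
    · intro h
      push_neg at h
      exact ⟨h.1, fun hc => h.2 (by linear_combination hc)⟩
  unfold g
  rw [hset, Finset.card_sdiff_of_subset (Finset.subset_univ _)]
  have hcard2 : ({0, -2} : Finset (ZMod p)).card = 2 := by
    rw [Finset.card_insert_of_notMem, Finset.card_singleton]
    simp only [Finset.mem_singleton]
    intro h
    exact hne2 (by linear_combination h)
  rw [hcard2, Finset.card_univ, ZMod.card]

lemma g_mul {m n : ℕ} [NeZero m] [NeZero n] (h : Nat.Coprime m n) :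
    g (m * n) = g m * g n := by
  haveI : NeZero (m * n) := ⟨Nat.mul_ne_zero (NeZero.ne m) (NeZero.ne n)⟩
  let e := ZMod.chineseRemainder h
  have hcard : (Finset.univ.filter (fun x : ZMod (m * n) => IsUnit x ∧ IsUnit (x + 2))).card
      = (Finset.univ.filter (fun y : ZMod m × ZMod n => IsUnit y ∧ IsUnit (y + 2))).card := by
    apply Finset.card_bij (fun x _ => e x)
    · intro x hx
      simp only [Finset.mem_filter, Finset.mem_univ, true_and] at hx ⊢
      have h2 : e (x + 2) = e x + 2 := by rw [map_add, map_ofNat]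
      exact ⟨hx.1.map e, h2 ▸ hx.2.map e⟩
    · intro a _ b _ hab
      exact e.injective hab
    · intro y hy
      refine ⟨e.symm y, ?_, e.apply_symm_apply y⟩
      simp only [Finset.mem_filter, Finset.mem_univ, true_and] at hy ⊢
      have h2 : e.symm (y + 2) = e.symm y + 2 := by rw [map_add, map_ofNat]
      exact ⟨hy.1.map e.symm, h2 ▸ hy.2.map e.symm⟩
  have hprod : (Finset.univ.filter (fun y : ZMod m × ZMod n => IsUnit y ∧ IsUnit (y + 2)))
      = (Finset.univ.filter (fun a : ZMod m => IsUnit a ∧ IsUnit (a + 2))) ×ˢ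
        (Finset.univ.filter (fun b : ZMod n => IsUnit b ∧ IsUnit (b + 2))) := by
    ext y
    simp only [Finset.mem_filter, Finset.mem_univ, true_and, Finset.mem_product,
      isUnit_prod, Prod.fst_add, Prod.snd_add]
    have h1 : ((2 : ZMod m × ZMod n)).1 = 2 := rfl
    have h2 : ((2 : ZMod m × ZMod n)).2 = 2 := rfl
    rw [h1, h2]
    tauto
  unfold g
  rw [hcard, hprod, Finset.card_product]

lemma card_interval (M : ℕ) [NeZero M] (hM : 3 ≤ M) :
    ((Finset.Icc 3 (M + 2)).filter
      (fun N => Nat.Coprime N M ∧ Nat.Coprime (N + 2) M)).card = g M := by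
  unfold g
  refine Finset.card_bij (fun (N : ℕ) _ => (N : ZMod M)) ?_ ?_ ?_
  · intro N hN
    simp only [Finset.mem_filter, Finset.mem_Icc] at hN
    simp only [Finset.mem_filter, Finset.mem_univ, true_and]
    have hc : ((N : ZMod M) + 2) = ((N + 2 : ℕ) : ZMod M) := by push_cast; ring
    exact ⟨(ZMod.isUnit_iff_coprime N M).mpr hN.2.1,
      hc ▸ (ZMod.isUnit_iff_coprime (N + 2) M).mpr hN.2.2⟩
  · intro a ha b hb hab
    simp only [Finset.mem_filter, Finset.mem_Icc] at ha hb
    have h := (ZMod.natCast_eq_natCast_iff a b M).mp hab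
    have hd : (M : ℤ) ∣ (b : ℤ) - (a : ℤ) := (Nat.modEq_iff_dvd).mp h
    have habs : |(b : ℤ) - (a : ℤ)| < (M : ℤ) := by
      rw [abs_lt]
      constructor <;> omega
    have := Int.eq_zero_of_abs_lt_dvd hd habs
    omega
  · intro y hy
    simp only [Finset.mem_filter, Finset.mem_univ, true_and] at hy
    have hvlt : y.val < M := ZMod.val_lt y
    set N : ℕ := if y.val < 3 then y.val + M else y.val with hNdef
    have hNy : (N : ZMod M) = y := by
      have hv : ((y.val : ℕ) : ZMod M) = y := (ZMod.natCast_val y).trans (ZMod.cast_id _ _)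
      by_cases hc : y.val < 3
      · simp only [hNdef, if_pos hc]
        push_cast
        rw [ZMod.natCast_self, add_zero, hv]
      · simp only [hNdef, if_neg hc]
        exact hv
    refine ⟨N, ?_, hNy⟩
    simp only [Finset.mem_filter, Finset.mem_Icc]
    have hNbound : 3 ≤ N ∧ N ≤ M + 2 := by
      by_cases hc : y.val < 3
      · simp only [hNdef, if_pos hc]; omega
      · simp only [hNdef, if_neg hc]; omega
    have hc2 : ((N + 2 : ℕ) : ZMod M) = y + 2 := by push_cast; rw [hNy]
    exact ⟨hNbound, (ZMod.isUnit_iff_coprime N M).mp (hNy ▸ hy.1),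
      (ZMod.isUnit_iff_coprime (N + 2) M).mp (hc2 ▸ hy.2)⟩

lemma g_primor (k : ℕ) (hk : 1 ≤ k) :
    g (primor k) = ∏ i ∈ Finset.Icc 2 k, (P i - 2) := by
  induction k, hk using Nat.le_induction with
  | base =>
      have h1 : primor 1 = 2 := by
        rw [primor]
        simp [P_one]
      rw [g_congr h1, g_two]
      simp
  | succ k hk ih =>
      have hstep : primor (k + 1) = primor k * P (k + 1) :=
        Finset.prod_Icc_succ_top (by omega) _
      have hcop : Nat.Coprime (primor k) (P (k + 1)) := by
        apply Nat.Coprime.prod_left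
        intro i hi
        rw [Nat.coprime_primes (P_prime i) (P_prime (k + 1))]
        intro he
        have hlt := P_lt_P (Finset.mem_Icc.mp hi).1 (show i < k + 1 by
          have := (Finset.mem_Icc.mp hi).2; omega)
        omega
      have hP2 : 2 < P (k + 1) := by
        have := P_lt_P (le_refl 1) (show 1 < k + 1 by omega)
        rw [P_one] at this
        omega
      rw [g_congr hstep, g_mul hcop, ih, g_odd (P_prime (k + 1)) hP2,
        Finset.prod_Icc_succ_top (show 2 ≤ k + 1 by omega)]

open scoped Classical in
/-- For `k ≥ 2`, the number of naturals `N` such that both `N` and `N + 2`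
lie in `[5, 4 + ∏_{i=1}^k P_i]` and both are coprime to `∏_{i=1}^k P_i` is
`∏_{i=2}^k (P_i - 2)`. -/
theorem num_prospective_twin_primes (k : ℕ) (hk : 2 ≤ k) :
    ((Finset.Icc 5 (4 + primor k)).filter
      (fun N => N + 2 ∈ Finset.Icc 5 (4 + primor k) ∧
        Nat.Coprime N (primor k) ∧ Nat.Coprime (N + 2) (primor k))).card
      = ∏ i ∈ Finset.Icc 2 k, (P i - 2) := by
  set M := primor k with hMdef
  have h2 : (2 : ℕ) ∣ M := P_one ▸ P_dvd_primor (le_refl 1) (by omega)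
  have h3 : (3 : ℕ) ∣ M := P_two ▸ P_dvd_primor (by norm_num) hk
  have hM3 : 3 ≤ M := Nat.le_of_dvd (primor_pos k) h3
  have hset : ((Finset.Icc 5 (4 + M)).filter
      (fun N => N + 2 ∈ Finset.Icc 5 (4 + M) ∧
        Nat.Coprime N M ∧ Nat.Coprime (N + 2) M))
      = (Finset.Icc 3 (M + 2)).filter
        (fun N => Nat.Coprime N M ∧ Nat.Coprime (N + 2) M) := by
    ext N
    simp only [Finset.mem_filter, Finset.mem_Icc]
    constructor
    · rintro ⟨⟨h5, _⟩, ⟨_, hb⟩, hc⟩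
      exact ⟨⟨by omega, by omega⟩, hc⟩
    · rintro ⟨⟨hge, hle⟩, hc1, hc2⟩
      have hN5 : 5 ≤ N := by
        rcases Nat.lt_or_ge N 5 with h | h
        · interval_cases N
          · exfalso
            have : (3 : ℕ) ∣ Nat.gcd 3 M := Nat.dvd_gcd dvd_rfl h3
            rw [hc1] at this
            exact absurd (Nat.le_of_dvd one_pos this) (by norm_num)
          · exfalso
            have : (2 : ℕ) ∣ Nat.gcd 4 M := Nat.dvd_gcd (by norm_num) h2
            rw [hc1] at this
            exact absurd (Nat.le_of_dvd one_pos this) (by norm_num)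
        · exact h
      exact ⟨⟨hN5, by omega⟩, ⟨by omega, by omega⟩, hc1, hc2⟩
  rw [hset, card_interval M hM3, g_congr hMdef, g_primor k (by omega)]
end

section
/- Let k ≥ 2. Among the natural numbers N with 5 ≤ N ≤ 4 + ∏_{i=1}^{k} P_i that are coprime to ∏_{i=1}^{k} P_i, the number of those congruent to 5 modulo 6 equals the number of those congruent to 1 modulo 6. -/
lemma six_dvd_primor (k : ℕ) (hk : 2 ≤ k) : 6 ∣ primor k := by
  have h1 : P 1 = 2 := by simp [P, Nat.nth_prime_zero_eq_two]
  have h2 : P 2 = 3 := by simp [P, Nat.nth_prime_one_eq_three]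
  have hd1 : 2 ∣ primor k := h1 ▸ Finset.dvd_prod_of_mem P (by simp; omega : (1:ℕ) ∈ Finset.Icc 1 k)
  have hd2 : 3 ∣ primor k := h2 ▸ Finset.dvd_prod_of_mem P (by simp; omega : (2:ℕ) ∈ Finset.Icc 1 k)
  exact ((by norm_num : Nat.Coprime 2 3)).mul_dvd_of_dvd_of_dvd hd1 hd2

lemma cop_helper (M N x c : ℕ) (h : Nat.Coprime N M) (hx : x + N = c * M) :
    Nat.Coprime x M := by
  have h1 : Nat.gcd x M ∣ N := by
    have hd1 : Nat.gcd x M ∣ c * M := Dvd.dvd.mul_left (Nat.gcd_dvd_right x M) c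
    have hd2 : Nat.gcd x M ∣ x := Nat.gcd_dvd_left x M
    have : Nat.gcd x M ∣ c * M - x := Nat.dvd_sub hd1 hd2
    have hNeq : N = c * M - x := by omega
    rwa [← hNeq] at this
  have : Nat.gcd x M ∣ Nat.gcd N M := Nat.dvd_gcd h1 (Nat.gcd_dvd_right x M)
  rw [h] at this
  exact Nat.eq_one_of_dvd_one this

open scoped Classical in
/-- For `k ≥ 2`, among the naturals `N` with `5 ≤ N ≤ 4 + ∏_{i=1}^k P_i`
coprime to `∏_{i=1}^k P_i`, as many are `≡ 5 (mod 6)` as are `≡ 1 (mod 6)`. -/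
theorem equal_split_mod_six (k : ℕ) (hk : 2 ≤ k) :
    ((Finset.Icc 5 (4 + primor k)).filter
      (fun N => Nat.Coprime N (primor k) ∧ N % 6 = 5)).card
    = ((Finset.Icc 5 (4 + primor k)).filter
      (fun N => Nat.Coprime N (primor k) ∧ N % 6 = 1)).card := by
  set M := primor k with hMdef
  have hM6 : 6 ∣ M := six_dvd_primor k hk
  have hMpos : 0 < M := primor_pos k
  have hM : 6 ≤ M := Nat.le_of_dvd hMpos hM6
  set f : ℕ → ℕ := fun N => if N + 4 < M then M - N else 2 * M - N with hf
  apply Finset.card_bij' (fun N _ => f N) (fun N _ => f N)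
  · -- maps into RHS
    intro N hN
    simp only [Finset.mem_filter, Finset.mem_Icc] at hN ⊢
    obtain ⟨⟨hN1, hN2⟩, hcop, hmod⟩ := hN
    have hNle : N ≤ M + 1 := by omega
    simp only [hf]
    split_ifs with h
    · refine ⟨⟨by omega, by omega⟩, cop_helper M N (M - N) 1 hcop (by omega), by omega⟩
    · refine ⟨⟨by omega, by omega⟩, cop_helper M N (2 * M - N) 2 hcop (by omega), by omega⟩
  · -- maps into LHS
    intro N hN
    simp only [Finset.mem_filter, Finset.mem_Icc] at hN ⊢
    obtain ⟨⟨hN1, hN2⟩, hcop, hmod⟩ := hN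
    have hNle : N ≤ M + 1 := by omega
    simp only [hf]
    split_ifs with h
    · refine ⟨⟨by omega, by omega⟩, cop_helper M N (M - N) 1 hcop (by omega), by omega⟩
    · refine ⟨⟨by omega, by omega⟩, cop_helper M N (2 * M - N) 2 hcop (by omega), by omega⟩
  · -- left inverse
    intro N hN
    simp only [Finset.mem_filter, Finset.mem_Icc] at hN
    obtain ⟨⟨hN1, hN2⟩, hcop, hmod⟩ := hN
    have hNle : N ≤ M + 1 := by omega
    simp only [hf]
    split_ifs <;> omega
  · -- right inverse
    intro N hN
    simp only [Finset.mem_filter, Finset.mem_Icc] at hN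
    obtain ⟨⟨hN1, hN2⟩, hcop, hmod⟩ := hN
    have hNle : N ≤ M + 1 := by omega
    simp only [hf]
    split_ifs <;> omega
end

section
/- Let k ≥ 2 and let N be a natural number such that both N and N + 2 are coprime to Q = ∏_{i=1}^{k} P_i. Then exactly P_{k+1} − 2 of the P_{k+1} values m with 0 ≤ m ≤ P_{k+1} − 1 are such that both N + m·Q and N + 2 + m·Q are coprime to ∏_{i=1}^{k+1} P_i. -/
lemma not_dvd_primor (k : ℕ) : ¬ P (k + 1) ∣ primor k := by
  intro h
  obtain ⟨i, hi, hdvd⟩ := (P_prime (k + 1)).prime.exists_mem_finset_dvd h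
  simp only [Finset.mem_Icc] at hi
  have heq : P (k + 1) = P i :=
    (Nat.prime_dvd_prime_iff_eq (P_prime _) (P_prime _)).mp hdvd
  have := Nat.nth_injective Nat.infinite_setOf_prime heq
  simp only [Nat.add_sub_cancel] at this
  omega

open scoped Classical in
/-- For `k ≥ 2` and `N` with both `N` and `N + 2` coprime to
`Q = ∏_{i=1}^k P_i`, exactly `P_{k+1} - 2` of the values `m` with
`0 ≤ m ≤ P_{k+1} - 1` make both `N + m·Q` and `N + 2 + m·Q` coprime to
`∏_{i=1}^{k+1} P_i`. -/
theorem propagation_of_prospective_twin_primes (k : ℕ) (hk : 2 ≤ k) (N : ℕ)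
    (hN : Nat.Coprime N (primor k)) (hN2 : Nat.Coprime (N + 2) (primor k)) :
    ((Finset.range (P (k + 1))).filter
      (fun m => Nat.Coprime (N + m * primor k) (primor (k + 1)) ∧
        Nat.Coprime (N + 2 + m * primor k) (primor (k + 1)))).card
      = P (k + 1) - 2 := by
  set p := P (k + 1) with hp
  set Q := primor k with hQ
  have hpprime : p.Prime := P_prime _
  haveI : Fact p.Prime := ⟨hpprime⟩
  haveI : NeZero p := ⟨hpprime.ne_zero⟩
  have hsplit : primor (k + 1) = Q * p := by
    rw [primor, Finset.prod_Icc_succ_top (show 1 ≤ k + 1 by omega)]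
    rfl
  have hpk : p = Nat.nth Nat.Prime k := by simp [hp, P]
  have h2lt : 2 < p := by
    have h0 := (Nat.prime_nth_prime 0).two_le
    have h1 : Nat.nth Nat.Prime 0 < Nat.nth Nat.Prime k :=
      (Nat.nth_lt_nth Nat.infinite_setOf_prime).mpr (by omega)
    omega
  -- q := Q as element of ZMod p, nonzero
  set q : ZMod p := (Q : ZMod p) with hq
  have hqne : q ≠ 0 := by
    rw [hq, Ne, ZMod.natCast_eq_zero_iff]
    exact not_dvd_primor k
  set a : ZMod p := -(N : ZMod p) * q⁻¹ with ha
  set b : ZMod p := -((N : ZMod p) + 2) * q⁻¹ with hb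
  have hab : a ≠ b := by
    intro h
    have h2 : ((2 : ℕ) : ZMod p) = 0 := by
      have h4 := mul_right_cancel₀ (inv_ne_zero hqne) h
      have h3 : (N : ZMod p) = (N : ZMod p) + 2 := by
        have h5 := neg_injective h4
        linear_combination h5
      push_cast
      linear_combination -h3
    have hd : p ∣ 2 := (ZMod.natCast_eq_zero_iff 2 p).mp h2
    have := Nat.le_of_dvd (by norm_num) hd
    omega
  -- key characterization
  have hkey : ∀ x : ZMod p, ∀ c : ZMod p, (c + x * q = 0 ↔ x = -c * q⁻¹) := by
    intro x c
    constructor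
    · intro h
      field_simp
      linear_combination h
    · intro h
      rw [h]
      field_simp
      ring
  have hcond : ∀ m ∈ Finset.range p,
      ((Nat.Coprime (N + m * Q) (primor (k + 1)) ∧
        Nat.Coprime (N + 2 + m * Q) (primor (k + 1))) ↔
      ((m : ZMod p) ≠ a ∧ (m : ZMod p) ≠ b)) := by
    intro m _
    rw [hsplit]
    have c1 : Nat.Coprime (N + m * Q) Q := (Nat.coprime_add_mul_right_left N Q m).mpr hN
    have c2 : Nat.Coprime (N + 2 + m * Q) Q := (Nat.coprime_add_mul_right_left (N+2) Q m).mpr hN2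
    rw [Nat.coprime_mul_iff_right, Nat.coprime_mul_iff_right]
    have e1 : Nat.Coprime (N + m * Q) p ↔ (m : ZMod p) ≠ a := by
      rw [Nat.coprime_comm, hpprime.coprime_iff_not_dvd,
        ← ZMod.natCast_eq_zero_iff]
      push_cast
      rw [hkey]
    have e2 : Nat.Coprime (N + 2 + m * Q) p ↔ (m : ZMod p) ≠ b := by
      rw [Nat.coprime_comm, hpprime.coprime_iff_not_dvd,
        ← ZMod.natCast_eq_zero_iff]
      push_cast
      rw [show ((N : ZMod p) + 2 + m * q) = ((N : ZMod p) + 2) + m * q by ring, hkey]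
    rw [e1, e2]
    tauto
  rw [Finset.filter_congr hcond]
  have hcard : ((Finset.range p).filter
      (fun (m : ℕ) => ((m : ZMod p) ≠ a ∧ (m : ZMod p) ≠ b))).card
      = ((Finset.univ : Finset (ZMod p)).filter (fun x => x ≠ a ∧ x ≠ b)).card := by
    refine Finset.card_bij' (fun m _ => ((m : ℕ) : ZMod p)) (fun x _ => x.val) ?_ ?_ ?_ ?_
    · intro m hm
      simp only [Finset.mem_filter, Finset.mem_range] at hm ⊢
      exact ⟨Finset.mem_univ _, hm.2⟩
    · intro x hx
      simp only [Finset.mem_filter, Finset.mem_univ, true_and] at hx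
      simp only [Finset.mem_filter, Finset.mem_range, ZMod.natCast_val, ZMod.cast_id]
      exact ⟨ZMod.val_lt x, hx⟩
    · intro m hm
      simp only [Finset.mem_filter, Finset.mem_range] at hm
      exact ZMod.val_cast_of_lt hm.1
    · intro x _
      simp [ZMod.natCast_val, ZMod.cast_id]
  rw [hcard]
  have : (Finset.univ : Finset (ZMod p)).filter (fun x => x ≠ a ∧ x ≠ b)
      = Finset.univ \ {a, b} := by
    ext x
    simp [and_comm]
  rw [this, Finset.card_sdiff_of_subset (Finset.subset_univ _), Finset.card_univ, ZMod.card,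
    Finset.card_insert_of_notMem (by simpa using hab), Finset.card_singleton]
end

section
/- For every l ≥ 2, neither ∏_{i=1}^{l} P_i − 1 nor ∏_{i=1}^{l} P_i + 1 is the square of a prime number; that is, there is no prime p with p² = ∏_{i=1}^{l} P_i − 1 or p² = ∏_{i=1}^{l} P_i + 1. -/
set_option linter.unnecessarySimpa false


lemma P_odd {i : ℕ} (hi : 2 ≤ i) : Odd (P i) := by
  have h2 : 2 < P i := by
    have := (Nat.nth_lt_nth Nat.infinite_setOf_prime (k := 0) (n := i - 1)).mpr (by omega)
    have h0 : Nat.nth Nat.Prime 0 = 2 := by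
      have := Nat.nth_count (p := Nat.Prime) Nat.prime_two
      have h0 : Nat.count Nat.Prime 2 = 0 := by decide
      rwa [h0] at this
    rw [h0] at this
    exact this
  exact (P_prime i).odd_of_ne_two (by omega)

/-- For every `l ≥ 2`, neither `∏_{i=1}^l P_i - 1` nor
`∏_{i=1}^l P_i + 1` is the square of a prime. -/
theorem primorial_pm_one_not_prime_square (l : ℕ) (hl : 2 ≤ l) :
    ¬ ∃ p : ℕ, Nat.Prime p ∧ (p ^ 2 = primor l - 1 ∨ p ^ 2 = primor l + 1) := by
  rintro ⟨p, hp, hcase⟩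
  have h2l : (2:ℕ) ∈ Finset.Icc 1 l := by simp [Finset.mem_Icc]; omega
  have h3 : 3 ∣ primor l := by
    rw [← P_two]
    exact Finset.dvd_prod_of_mem _ h2l
  have hodd : Odd (∏ i ∈ Finset.Icc 2 l, P i) :=
    Finset.prod_induction _ Odd (fun a b ha hb => ha.mul hb) odd_one
      (fun i hi => P_odd (Finset.mem_Icc.mp hi).1)
  have hsplit : primor l = 2 * ∏ i ∈ Finset.Icc 2 l, P i := by
    have hins : Finset.Icc 1 l = insert 1 (Finset.Icc 2 l) := by
      ext x; simp [Finset.mem_Icc]; omega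
    rw [primor, hins, Finset.prod_insert (by simp), P_one]
  obtain ⟨m, hm⟩ := hodd
  rcases hcase with h | h
  · -- p^2 = primor l - 1, so 3 ∣ p^2 + 1, impossible
    obtain ⟨k, hk⟩ := h3
    have hpm : p ^ 2 % 3 = (p % 3) ^ 2 % 3 := Nat.pow_mod p 2 3
    have hr : p % 3 = 0 ∨ p % 3 = 1 ∨ p % 3 = 2 := by omega
    rcases hr with h' | h' | h' <;> rw [h'] at hpm <;> norm_num at hpm <;> omega
  · -- p^2 = primor l + 1 = 4m + 3, but squares mod 4 are 0 or 1
    have hpm4 : p ^ 2 % 4 = (p % 4) ^ 2 % 4 := Nat.pow_mod p 2 4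
    have hr : p % 4 = 0 ∨ p % 4 = 1 ∨ p % 4 = 2 ∨ p % 4 = 3 := by omega
    rcases hr with h' | h' | h' | h' <;> rw [h'] at hpm4 <;> norm_num at hpm4 <;> omega
end

section
/- Let 3 ≤ k ≤ k' be natural numbers. Then, as real numbers, ∏_{j=k}^{k'−1} (1 − 2/(P_j − 2)) ≥ 1 − 2/(P_k − 2) − 2·(k' − k)/P_k. -/
lemma nth_zero' : Nat.nth Nat.Prime 0 = 2 := by
  have := Nat.nth_count Nat.prime_two
  rwa [show Nat.count Nat.Prime 2 = 0 by
    simp [Nat.count_succ, Nat.not_prime_zero, Nat.not_prime_one]] at this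

lemma nth_one' : Nat.nth Nat.Prime 1 = 3 := by
  have := Nat.nth_count Nat.prime_three
  rwa [show Nat.count Nat.Prime 3 = 1 by
    simp [Nat.count_succ, Nat.not_prime_zero, Nat.not_prime_one, Nat.prime_two]] at this

lemma nth_step (m : ℕ) (hm : 1 ≤ m) : Nat.nth Nat.Prime m + 2 ≤ Nat.nth Nat.Prime (m+1) := by
  have hlt : Nat.nth Nat.Prime m < Nat.nth Nat.Prime (m+1) :=
    Nat.nth_lt_nth Nat.infinite_setOf_prime |>.2 (by omega)
  have hgt : 2 < Nat.nth Nat.Prime m := by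
    have := (Nat.nth_lt_nth Nat.infinite_setOf_prime (p := Nat.Prime)).2 (show 0 < m by omega)
    rw [nth_zero'] at this; omega
  have hodd1 : Odd (Nat.nth Nat.Prime m) :=
    (Nat.prime_nth_prime m).odd_of_ne_two (by omega)
  have hodd2 : Odd (Nat.nth Nat.Prime (m+1)) :=
    (Nat.prime_nth_prime (m+1)).odd_of_ne_two (by omega)
  obtain ⟨a, ha⟩ := hodd1; obtain ⟨b, hb⟩ := hodd2; omega

lemma P_ge (k j : ℕ) (hk : 2 ≤ k) (h : k ≤ j) : P k + 2*(j-k) ≤ P j := by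
  induction j with
  | zero => omega
  | succ n ih =>
    rcases Nat.lt_or_ge n k with h1 | h2
    · have : k = n + 1 := by omega
      subst this; simp
    · have h3 := ih h2
      have h4 : P (n+1) = Nat.nth Nat.Prime n := by simp [P]
      have h6 := nth_step (n-1) (by omega)
      have h7 : n - 1 + 1 = n := by omega
      rw [h7] at h6
      have h5 : P n = Nat.nth Nat.Prime (n-1) := rfl
      omega

lemma P_ge5 (j : ℕ) (hj : 3 ≤ j) : 5 ≤ P j := by
  have := P_ge 2 j (le_refl 2) (by omega)
  have h2 : P 2 = 3 := nth_one'
  omega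

lemma prod_one_sub_ge (s : Finset ℕ) (f : ℕ → ℝ) (h0 : ∀ j ∈ s, 0 ≤ f j)
    (h1 : ∀ j ∈ s, f j ≤ 1) : (∏ j ∈ s, (1 - f j)) ≥ 1 - ∑ j ∈ s, f j := by
  classical
  induction s using Finset.cons_induction with
  | empty => simp
  | cons a s ha ih =>
    rw [Finset.prod_cons, Finset.sum_cons]
    have ih' := ih (fun j hj => h0 j (Finset.mem_cons.mpr (Or.inr hj)))
      (fun j hj => h1 j (Finset.mem_cons.mpr (Or.inr hj)))
    have hfa0 := h0 a (Finset.mem_cons_self a s)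
    have hfa1 := h1 a (Finset.mem_cons_self a s)
    have hsum0 : 0 ≤ ∑ j ∈ s, f j :=
      Finset.sum_nonneg (fun j hj => h0 j (Finset.mem_cons.mpr (Or.inr hj)))
    nlinarith [ih']

/-- For `3 ≤ k ≤ k'`, as real numbers,
`∏_{j=k}^{k'-1} (1 - 2/(P_j - 2)) ≥ 1 - 2/(P_k - 2) - 2(k' - k)/P_k`. -/
theorem product_lower_bound (k k' : ℕ) (hk : 3 ≤ k) (hkk' : k ≤ k') :
    (∏ j ∈ Finset.Ico k k', (1 - 2 / ((P j : ℝ) - 2)))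
      ≥ 1 - 2 / ((P k : ℝ) - 2) - 2 * ((k' : ℝ) - (k : ℝ)) / (P k : ℝ) := by
  have hPk : (5:ℝ) ≤ P k := by exact_mod_cast P_ge5 k hk
  set f : ℕ → ℝ := fun j => 2 / ((P j : ℝ) - 2) with hf
  have hP : ∀ j ∈ Finset.Ico k k', (5:ℝ) ≤ P j := by
    intro j hj
    exact_mod_cast P_ge5 j (le_trans hk (Finset.mem_Ico.mp hj).1)
  have h0 : ∀ j ∈ Finset.Ico k k', 0 ≤ f j := by
    intro j hj
    have := hP j hj
    exact div_nonneg (by norm_num) (by linarith)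
  have h1 : ∀ j ∈ Finset.Ico k k', f j ≤ 1 := by
    intro j hj
    have := hP j hj
    rw [hf, div_le_one (by linarith)]
    linarith
  have key := prod_one_sub_ge (Finset.Ico k k') f h0 h1
  have hsum : ∑ j ∈ Finset.Ico k k', f j
      ≤ 2 / ((P k : ℝ) - 2) + 2 * ((k' : ℝ) - (k : ℝ)) / (P k : ℝ) := by
    rcases Nat.eq_or_lt_of_le hkk' with rfl | hlt
    · simp only [Finset.Ico_self, Finset.sum_empty, sub_self, mul_zero, zero_div, add_zero]
      exact div_nonneg (by norm_num) (by linarith)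
    · rw [Finset.sum_eq_sum_Ico_succ_bot hlt]
      have hbound : ∑ j ∈ Finset.Ico (k+1) k', f j ≤ (k' - (k+1) : ℕ) * (2 / (P k : ℝ)) := by
        rw [← Nat.card_Ico (k+1) k', ← nsmul_eq_mul, ← Finset.sum_const]
        apply Finset.sum_le_sum
        intro j hj
        obtain ⟨hj1, hj2⟩ := Finset.mem_Ico.mp hj
        have hPj : (P k : ℝ) + 2 ≤ P j := by
          have := P_ge k j (by omega) (by omega)
          have h2 : 2 ≤ 2*(j-k) := by omega
          exact_mod_cast by omega
        rw [hf]
        apply div_le_div_of_nonneg_left (by norm_num) (by linarith) (by linarith)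
      have hcast : ((k' - (k+1) : ℕ) : ℝ) ≤ (k' : ℝ) - (k : ℝ) := by
        push_cast [Nat.cast_sub (by omega : k + 1 ≤ k')]
        linarith
      have hfk : f k = 2 / ((P k : ℝ) - 2) := rfl
      have h2 : (k' - (k+1) : ℕ) * (2 / (P k : ℝ)) ≤ 2 * ((k' : ℝ) - (k : ℝ)) / (P k : ℝ) := by
        have hp : (0:ℝ) < P k := by linarith
        rw [show ((k' - (k+1) : ℕ) : ℝ) * (2 / (P k : ℝ))
            = 2 * ((k' - (k+1) : ℕ) : ℝ) / (P k : ℝ) by ring]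
        gcongr
      linarith
  have hsum0 : 0 ≤ ∑ j ∈ Finset.Ico k k', f j := Finset.sum_nonneg h0
  calc (∏ j ∈ Finset.Ico k k', (1 - f j)) ≥ 1 - ∑ j ∈ Finset.Ico k k', f j := key
    _ ≥ 1 - 2 / ((P k : ℝ) - 2) - 2 * ((k' : ℝ) - (k : ℝ)) / (P k : ℝ) := by linarith
end
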